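/- Let r : K → R be a graph morphism and d : K → D a graph monomorphism, with D = (K + K̄) +ₑ K̃ (K̄ the full subgraph on nodes outside d(K), K̃ the linking edges). Define H as the graph with nodes R_N + K̄_N and edges R_E + K̄_E + R̃, where R̃ has one edge (e, n_K, p_K) : r₁(n_K) → r₁(p_K) for each linking edge e : n_K → p_K in K̃, with r₁ = r + id_{K̄} on nodes. Then the square with h : R → H the canonical inclusion and r₁ = (r + id_{K̄}) +ₑ r̃ is a pushout of d and r in the category of graphs. -/

import Mathlib

universe u

structure Grph : Type (u + 1) where
  N : Type u
  E : Type u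
  src : E → N
  tgt : E → N

@[ext]
structure GraphHom (X Y : Grph.{u}) where
  fN : X.N → Y.N
  fE : X.E → Y.E
  hsrc : ∀ e, Y.src (fE e) = fN (X.src e)
  htgt : ∀ e, Y.tgt (fE e) = fN (X.tgt e)

def GraphHom.id (X : Grph.{u}) : GraphHom X X :=
  ⟨_root_.id, _root_.id, fun _ => rfl, fun _ => rfl⟩

/-- `g.comp f` is the composite `g ∘ f`. -/
def GraphHom.comp {X Y Z : Grph.{u}} (g : GraphHom Y Z) (f : GraphHom X Y) :
    GraphHom X Z :=
  ⟨g.fN ∘ f.fN, g.fE ∘ f.fE,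
    fun e => by simp [Function.comp, g.hsrc, f.hsrc],
    fun e => by simp [Function.comp, g.htgt, f.htgt]⟩

section
/- Decomposition data: `D = (K + Kbar) +ₑ Kt`, with `Kt` the linking edges,
   given by their source/target functions into the nodes of `K + Kbar`. -/
variable (K R Kbar : Grph.{u}) (r : GraphHom K R)
variable (Kt : Type u) (ks kt : Kt → K.N ⊕ Kbar.N)

/-- The graph `D = (K + Kbar) +ₑ Kt`. -/
def Dgr : Grph.{u} where
  N := K.N ⊕ Kbar.N
  E := K.E ⊕ Kbar.E ⊕ Kt
  src := Sum.elim (Sum.inl ∘ K.src) (Sum.elim (Sum.inr ∘ Kbar.src) ks)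
  tgt := Sum.elim (Sum.inl ∘ K.tgt) (Sum.elim (Sum.inr ∘ Kbar.tgt) kt)

/-- The canonical inclusion (a monomorphism) `d : K → D`. -/
def dmor : GraphHom K (Dgr K Kbar Kt ks kt) :=
  ⟨Sum.inl, Sum.inl, fun _ => rfl, fun _ => rfl⟩

/-- The graph `H = (R + Kbar) +ₑ Rt`, where `Rt ≅ Kt` consists of one edge
`(e, n_K, p_K) : r₁ n_K → r₁ p_K` for each linking edge `e : n_K → p_K` in `Kt`. -/
def Hgr : Grph.{u} where
  N := R.N ⊕ Kbar.N
  E := R.E ⊕ Kbar.E ⊕ Kt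
  src := Sum.elim (Sum.inl ∘ R.src)
    (Sum.elim (Sum.inr ∘ Kbar.src) (Sum.map r.fN _root_.id ∘ ks))
  tgt := Sum.elim (Sum.inl ∘ R.tgt)
    (Sum.elim (Sum.inr ∘ Kbar.tgt) (Sum.map r.fN _root_.id ∘ kt))

/-- The canonical inclusion `h : R → H`. -/
def hmor : GraphHom R (Hgr K R Kbar r Kt ks kt) :=
  ⟨Sum.inl, Sum.inl, fun _ => rfl, fun _ => rfl⟩

/-- The morphism `r₁ = (r + id) +ₑ r̃ : D → H`. -/
def r1mor : GraphHom (Dgr K Kbar Kt ks kt) (Hgr K R Kbar r Kt ks kt) where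
  fN := Sum.map r.fN _root_.id
  fE := Sum.map r.fE _root_.id
  hsrc := by rintro (e | e | e) <;> simp [Dgr, Hgr, r.hsrc]
  htgt := by rintro (e | e | e) <;> simp [Dgr, Hgr, r.htgt]

end

/-!
STATEMENT 6: the square built from `d : K → D` (a graph monomorphism,
presented canonically via the decomposition `D = (K + Kbar) +ₑ Kt`) and
`r : K → R`, with `H = (R + Kbar) +ₑ Rt`, `h : R → H` the canonical
inclusion and `r₁ = (r + id) +ₑ r̃`, is a pushout in the category of graphs.
-/
theorem graph_pushout_along_mono (K R Kbar : Grph.{u}) (r : GraphHom K R)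
    (Kt : Type u) (ks kt : Kt → K.N ⊕ Kbar.N) :
    ((hmor K R Kbar r Kt ks kt).comp r =
      (r1mor K R Kbar r Kt ks kt).comp (dmor K Kbar Kt ks kt)) ∧
    ∀ (H' : Grph.{u}) (h' : GraphHom R H')
      (r₁' : GraphHom (Dgr K Kbar Kt ks kt) H'),
      h'.comp r = r₁'.comp (dmor K Kbar Kt ks kt) →
      ∃! η : GraphHom (Hgr K R Kbar r Kt ks kt) H',
        η.comp (hmor K R Kbar r Kt ks kt) = h' ∧
        η.comp (r1mor K R Kbar r Kt ks kt) = r₁' := by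
  constructor
  · ext e <;> rfl
  · intro H' h' r₁' hcomm
    have hN : ∀ n, h'.fN (r.fN n) = r₁'.fN (Sum.inl n) := fun n =>
      congrArg (fun f : GraphHom K H' => f.fN n) hcomm
    have hE : ∀ e, h'.fE (r.fE e) = r₁'.fE (Sum.inl e) := fun e =>
      congrArg (fun f : GraphHom K H' => f.fE e) hcomm
    refine ⟨⟨Sum.elim h'.fN (fun n => r₁'.fN (Sum.inr n)),
      Sum.elim h'.fE (fun e => r₁'.fE (Sum.inr e)), ?_, ?_⟩, ⟨?_, ?_⟩, ?_⟩
    · rintro (e | e | e)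
      · exact h'.hsrc e
      · exact (r₁'.hsrc (Sum.inr (Sum.inl e)))
      · have := r₁'.hsrc (Sum.inr (Sum.inr e))
        simp only [Dgr, Sum.elim_inr] at this
        simp only [Sum.elim_inr, Hgr]
        rw [this]
        rcases h : ks e with n | n <;> simp [h, hN]
    · rintro (e | e | e)
      · exact h'.htgt e
      · exact (r₁'.htgt (Sum.inr (Sum.inl e)))
      · have := r₁'.htgt (Sum.inr (Sum.inr e))
        simp only [Dgr, Sum.elim_inr] at this
        simp only [Sum.elim_inr, Hgr]
        rw [this]
        rcases h : kt e with n | n <;> simp [h, hN]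
    · ext x <;> rfl
    · ext x
      · rcases x with n | n
        · exact hN n
        · rfl
      · rcases x with e | e
        · exact hE e
        · rfl
    · rintro η ⟨hη1, hη2⟩
      ext x
      · rcases x with n | n
        · exact congrArg (fun f : GraphHom R H' => f.fN n) hη1
        · exact congrArg (fun f : GraphHom _ H' => f.fN (Sum.inr n)) hη2
      · rcases x with e | e | e
        · exact congrArg (fun f : GraphHom R H' => f.fE e) hη1
        · exact congrArg (fun f : GraphHom _ H' => f.fE (Sum.inr (Sum.inl e))) hη2
        · exact congrArg (fun f : GraphHom _ H' => f.fE (Sum.inr (Sum.inr e))) hη2
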